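/- Let h : ℝⁿ → ℝ ∪ {+∞} be convex and differentiable on its open domain, let F : ℝⁿ → ℝ be differentiable on int dom(h), let R : ℝⁿ → ℝ ∪ {+∞} be proper, and suppose L·h − F is convex on a convex set C ⊆ int dom(h) containing x and x⁺. If τ > 0 satisfies τL < 1 and x⁺ minimizes u ↦ R(u) + ⟨u − x, ∇F(x)⟩ + (1/τ)D_h(u, x), then (F + R)(x⁺) ≤ (F + R)(x) − (1/τ − L)·D_h(x⁺, x). -/

import Mathlib

open scoped RealInnerProductSpace

open Topology

/-- Gradient inequality for a convex function on a convex set. -/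
lemma grad_ineq_aux {n : ℕ} {s : Set (EuclideanSpace ℝ (Fin n))}
    {g : EuclideanSpace ℝ (Fin n) → ℝ} {g' x y : EuclideanSpace ℝ (Fin n)}
    (hg : ConvexOn ℝ s g) (hx : x ∈ s) (hy : y ∈ s)
    (hd : HasGradientAt g g' x) : g x + ⟪g', y - x⟫ ≤ g y := by
  have hline : ∀ t : ℝ, HasDerivAt (fun t : ℝ => x + t • (y - x)) (y - x) t := by
    intro t
    simpa using ((hasDerivAt_id t).smul_const (y - x)).const_add x
  have hd' : HasDerivAt (fun t : ℝ => g (x + t • (y - x))) ⟪g', y - x⟫ 0 := by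
    have hdF : HasFDerivAt g ((InnerProductSpace.toDual ℝ _) g') (x + (0:ℝ) • (y - x)) := by
      simpa using hasGradientAt_iff_hasFDerivAt.mp hd
    have := hdF.comp_hasDerivAt 0 (hline 0)
    exact this
  have hslope : ∀ t ∈ Set.Ioc (0:ℝ) 1,
      slope (fun t : ℝ => g (x + t • (y - x))) 0 t ≤ g y - g x := by
    intro t ht
    have hmem : x + t • (y - x) = (1 - t) • x + t • y := by
      module
    have hcv := hg.2 hx hy (by linarith [ht.2] : (0:ℝ) ≤ 1 - t) (le_of_lt ht.1)
      (by ring : (1 - t) + t = 1)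
    rw [slope_def_field]
    have : g (x + t • (y - x)) ≤ (1 - t) * g x + t * g y := by
      rw [hmem]; simpa [smul_eq_mul] using hcv
    have ht0 : (0:ℝ) < t := ht.1
    simp only [zero_smul, add_zero, sub_zero]
    rw [div_le_iff₀ ht0]
    nlinarith
  have htend : Filter.Tendsto (slope (fun t : ℝ => g (x + t • (y - x))) 0)
      (𝓝[>] (0:ℝ)) (𝓝 ⟪g', y - x⟫) :=
    (hasDerivAt_iff_tendsto_slope.mp hd').mono_left
      (nhdsWithin_mono _ (fun t ht => ne_of_gt ht))
  have hle : ⟪g', y - x⟫ ≤ g y - g x := by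
    refine le_of_tendsto htend ?_
    filter_upwards [Ioc_mem_nhdsGT_of_mem (by norm_num : (0:ℝ) ∈ Set.Ico (0:ℝ) 1)]
      with t ht using hslope t ht
  linarith

theorem stmt11 {n : ℕ} (C : Set (EuclideanSpace ℝ (Fin n)))
    (h F R : EuclideanSpace ℝ (Fin n) → ℝ)
    (h' F' : EuclideanSpace ℝ (Fin n) → EuclideanSpace ℝ (Fin n))
    (L τ : ℝ) (x xp : EuclideanSpace ℝ (Fin n))
    (hC : Convex ℝ C) (hx : x ∈ C) (hxp : xp ∈ C)
    (hh : ∀ u ∈ C, HasGradientAt h (h' u) u)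
    (hF : ∀ u ∈ C, HasGradientAt F (F' u) u)
    (hconv : ConvexOn ℝ C (fun u => L * h u - F u))
    (hτ : 0 < τ) (hτL : τ * L < 1)
    (hmin : ∀ u : EuclideanSpace ℝ (Fin n),
      R xp + ⟪xp - x, F' x⟫ + (1 / τ) * (h xp - h x - ⟪h' x, xp - x⟫)
        ≤ R u + ⟪u - x, F' x⟫ + (1 / τ) * (h u - h x - ⟪h' x, u - x⟫)) :
    F xp + R xp ≤ F x + R x - (1 / τ - L) * (h xp - h x - ⟪h' x, xp - x⟫) := by
  -- gradient of L*h - F at x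
  have hd : HasGradientAt (fun u => L * h u - F u) (L • h' x - F' x) x := by
    rw [hasGradientAt_iff_hasFDerivAt] at *
    have h1 := (hh x hx)
    have h2 := (hF x hx)
    rw [hasGradientAt_iff_hasFDerivAt] at h1 h2
    have := (h1.const_smul L).sub h2
    have e : (InnerProductSpace.toDual ℝ _) (L • h' x - F' x) = L • (InnerProductSpace.toDual ℝ _) (h' x) - (InnerProductSpace.toDual ℝ _) (F' x) := by
      ext v
      simp [InnerProductSpace.toDual, inner_sub_left, inner_smul_left, smul_eq_mul]
    rw [e]; exact this
  have key := grad_ineq_aux hconv hx hxp hd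
  have hinner : ⟪L • h' x - F' x, xp - x⟫ = L * ⟪h' x, xp - x⟫ - ⟪F' x, xp - x⟫ := by
    simp [inner_sub_left, inner_smul_left]
  -- F xp ≤ F x + ⟪F' x, xp - x⟫ + L * D
  have hdesc : F xp ≤ F x + ⟪F' x, xp - x⟫ + L * (h xp - h x - ⟪h' x, xp - x⟫) := by
    rw [hinner] at key; linarith
  have hm := hmin x
  simp only [sub_self, inner_zero_left, inner_zero_right] at hm
  have hsym : ⟪xp - x, F' x⟫ = ⟪F' x, xp - x⟫ := real_inner_comm _ _
  rw [hsym] at hm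
  nlinarith [hm, hdesc]
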